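/- arXiv:2312.03897 — 3 statements merged into one kernel-verified Lean document; each statement's English description precedes it below -/
import Mathlib

section
/- (Theorem 1, Zipf-optimal word lengths.) Let Σ be a finite alphabet and let P ⊆ Σ* be a nonempty, prefix-closed set of strings containing the empty string (the phonotactically valid wordforms) satisfying the constant phonotactic assumption with parameter K ≥ 2. Let V be a nonempty finite set of words and p a probability mass function on V with p(w) > 0 for every w ∈ V. Then there exists an injective lexicon φ : V → P assigning each word a phonotactically valid wordform such that for every w ∈ V, |φ(w)| ≤ −(1 / log_{|Σ|} K) · log_{|Σ|} p(w) + 1, i.e., |φ(w)| ≤ −log_K p(w) + 1. -/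
/-- Theorem 1, Zipf-optimal word lengths: Given a phonotactically
valid set `P` over a finite alphabet `S` satisfying the constant phonotactic
assumption with parameter `K ≥ 2`, and a positive probability mass function `p`
on a nonempty finite set of words `V`, there exists an injective lexicon
`φ : V → P` such that for every word `w`,
`|φ(w)| ≤ -(1 / log_{|S|} K) · log_{|S|} p(w) + 1`, i.e.,
`|φ(w)| ≤ -log_K p(w) + 1`. -/
theorem zipf_optimal_word_lengths {S V : Type*} [Fintype S] [Fintype V] [Nonempty V]
    (P : Set (List S)) (K : ℕ)
    (hnil : ([] : List S) ∈ P)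
    (hpref : ∀ α ∈ P, ∀ β : List S, β <+: α → β ∈ P)
    (hK2 : 2 ≤ K) (hKle : K ≤ Fintype.card S)
    (hconst : ∀ α ∈ P, Set.ncard {σ : S | α ++ [σ] ∈ P} = K)
    (p : V → ℝ) (hpos : ∀ w, 0 < p w) (hsum : ∑ w, p w = 1) :
    ∃ φ : V → List S, Function.Injective φ ∧ (∀ w, φ w ∈ P) ∧
      ∀ w, ((φ w).length : ℝ) ≤
          -(1 / Real.logb (Fintype.card S) K) * Real.logb (Fintype.card S) (p w) + 1 ∧
        ((φ w).length : ℝ) ≤ -Real.logb K (p w) + 1 := by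
  classical
  have hK1 : (1 : ℝ) < K := by exact_mod_cast hK2.trans_lt' one_lt_two
  have hKpos : (0 : ℝ) < K := lt_trans one_pos hK1
  have hple : ∀ w, p w ≤ 1 := by
    intro w
    rw [← hsum]
    exact Finset.single_le_sum (fun i _ => (hpos i).le) (Finset.mem_univ w)
  set ℓ : V → ℕ := fun w => ⌈-Real.logb K (p w)⌉₊ with hℓdef
  have hlog_nonneg : ∀ w, 0 ≤ -Real.logb K (p w) := fun w =>
    neg_nonneg.mpr (Real.logb_nonpos hK1 (hpos w).le (hple w))
  -- key Kraft-type inequality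
  have hkey : ∀ w, ((K : ℝ) ^ (ℓ w))⁻¹ ≤ p w := by
    intro w
    have h1 : -Real.logb K (p w) ≤ (ℓ w : ℝ) := Nat.le_ceil _
    have h2 : (-(ℓ w : ℝ)) ≤ Real.logb K (p w) := by linarith
    have h3 : (K : ℝ) ^ (-(ℓ w : ℝ)) ≤ (K : ℝ) ^ Real.logb K (p w) :=
      Real.rpow_le_rpow_of_exponent_le hK1.le h2
    rwa [Real.rpow_logb hKpos (by linarith) (hpos w), Real.rpow_neg hKpos.le,
      Real.rpow_natCast] at h3
  -- count of words needing length n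
  have hcard : ∀ n : ℕ, Fintype.card {w // ℓ w = n} ≤ K ^ n := by
    intro n
    have h1 : ((Finset.univ.filter (fun w => ℓ w = n)).card : ℝ) * ((K : ℝ) ^ n)⁻¹ ≤ 1 := by
      calc ((Finset.univ.filter (fun w => ℓ w = n)).card : ℝ) * ((K : ℝ) ^ n)⁻¹
          = ∑ _w ∈ Finset.univ.filter (fun w => ℓ w = n), ((K : ℝ) ^ n)⁻¹ := by
            rw [Finset.sum_const, nsmul_eq_mul]
        _ ≤ ∑ w ∈ Finset.univ.filter (fun w => ℓ w = n), p w := by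
            refine Finset.sum_le_sum fun w hw => ?_
            have hwn : ℓ w = n := (Finset.mem_filter.mp hw).2
            simpa [hwn] using hkey w
        _ ≤ ∑ w, p w :=
            Finset.sum_le_sum_of_subset_of_nonneg (Finset.filter_subset _ _)
              (fun i _ _ => (hpos i).le)
        _ = 1 := hsum
    have hKn : (0 : ℝ) < (K : ℝ) ^ n := pow_pos hKpos n
    have h2 : ((Finset.univ.filter (fun w => ℓ w = n)).card : ℝ) ≤ (K : ℝ) ^ n := by
      have := mul_le_mul_of_nonneg_right h1 hKn.le
      rwa [mul_assoc, inv_mul_cancel₀ hKn.ne', mul_one, one_mul] at this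
    rw [Fintype.card_subtype]
    exact_mod_cast h2
  -- embeddings into vectors over Fin K
  have hemb : ∀ n : ℕ, Nonempty ({w // ℓ w = n} ↪ List.Vector (Fin K) n) := by
    intro n
    refine Function.Embedding.nonempty_of_card_le ?_
    simpa [card_vector] using hcard n
  let emb : ∀ n : ℕ, {w // ℓ w = n} ↪ List.Vector (Fin K) n := fun n => (hemb n).some
  let c : ∀ n : ℕ, {w // ℓ w = n} → List (Fin K) := fun n x => (emb n x).toList
  have hclen : ∀ n x, (c n x).length = n := fun n x => (emb n x).toList_length
  have hckey : ∀ (n m : ℕ) (x : {w // ℓ w = n}) (y : {w // ℓ w = m}),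
      c n x = c m y → x.1 = y.1 := by
    intro n m x y hxy
    have hnm : n = m := by rw [← hclen n x, ← hclen m y, hxy]
    subst hnm
    have : emb n x = emb n y := List.Vector.toList_injective hxy
    exact congrArg Subtype.val ((emb n).injective this)
  let code : V → List (Fin K) := fun w => c (ℓ w) ⟨w, rfl⟩
  have hcode_len : ∀ w, (code w).length = ℓ w := fun w => hclen _ _
  have hcode_inj : Function.Injective code := fun w₁ w₂ h => hckey _ _ ⟨w₁, rfl⟩ ⟨w₂, rfl⟩ h
  -- per-node injections Fin K → S inside P
  have hsel : ∀ α : P, ∃ j : Fin K → S, Function.Injective j ∧ ∀ i, α.1 ++ [j i] ∈ P := by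
    intro α
    have hfin : {σ : S | α.1 ++ [σ] ∈ P}.Finite := Set.toFinite _
    have hc : hfin.toFinset.card = K := by
      rw [← Set.ncard_eq_toFinset_card]
      exact hconst _ α.2
    let e : hfin.toFinset ≃ Fin K := Finset.equivFinOfCardEq hc
    refine ⟨fun i => (e.symm i : S), ?_, ?_⟩
    · intro a b hab
      exact e.symm.injective (Subtype.ext hab)
    · intro i
      have := (e.symm i).2
      rw [Set.Finite.mem_toFinset] at this
      exact this
  choose j hjinj hjmem using hsel
  -- fold up codes into P
  let step : Fin K → P → P := fun i α => ⟨α.1 ++ [j α i], hjmem α i⟩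
  let g : List (Fin K) → P := fun l => l.foldr step ⟨[], hnil⟩
  have hg_nil : g [] = ⟨[], hnil⟩ := rfl
  have hg_cons : ∀ i t, g (i :: t) = step i (g t) := fun i t => rfl
  have hglen : ∀ l, (g l).1.length = l.length := by
    intro l
    induction l with
    | nil => rfl
    | cons i t ih => simp [hg_cons, step, ih]
  have hginj : Function.Injective g := by
    intro l₁ l₂ h
    induction l₁ generalizing l₂ with
    | nil =>
      cases l₂ with
      | nil => rfl
      | cons i t =>
        have := congrArg (fun x : P => x.1.length) h
        simp [hglen] at this
    | cons i t ih =>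
      cases l₂ with
      | nil =>
        have := congrArg (fun x : P => x.1.length) h
        simp [hglen] at this
      | cons i' t' =>
        have hv : (g t).1 ++ [j (g t) i] = (g t').1 ++ [j (g t') i'] :=
          congrArg Subtype.val h
        obtain ⟨h1, h2⟩ := List.append_inj' hv rfl
        have ht : g t = g t' := Subtype.ext h1
        have htt : t = t' := ih ht
        subst htt
        have hji : j (g t) i = j (g t) i' := by
          rw [ht] at h2 ⊢
          exact List.singleton_injective h2
        rw [hjinj (g t) hji]
  refine ⟨fun w => (g (code w)).1, ?_, fun w => (g (code w)).2, ?_⟩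
  · intro w₁ w₂ h
    exact hcode_inj (hginj (Subtype.ext h))
  · intro w
    have hlen : ((g (code w)).1.length : ℝ) = (ℓ w : ℝ) := by
      rw [hglen, hcode_len]
    have hb : ((ℓ w : ℝ)) ≤ -Real.logb K (p w) + 1 :=
      (Nat.ceil_lt_add_one (hlog_nonneg w)).le
    have heq : -(1 / Real.logb (Fintype.card S) K) * Real.logb (Fintype.card S) (p w)
        = -Real.logb K (p w) := by
      have hS1 : (1 : ℝ) < (Fintype.card S : ℝ) := by
        have : 2 ≤ Fintype.card S := hK2.trans hKle
        exact_mod_cast this.trans_lt' one_lt_two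
      have hlogS : Real.log (Fintype.card S) ≠ 0 := (Real.log_pos hS1).ne'
      have hlogK : Real.log K ≠ 0 := (Real.log_pos hK1).ne'
      rw [Real.logb, Real.logb, Real.logb]
      field_simp
    constructor
    · rw [heq, hlen]; exact hb
    · rw [hlen]; exact hb
end

section
/- (Theorem 2, CCH-optimal word lengths.) Let V be a nonempty finite set of words and, for each w ∈ V, a nonempty finite set C_w of contexts. Let p be a probability mass function on pairs (w, c) with w ∈ V and c ∈ C_w, with marginal p(w) = Σ_{c∈C_w} p(w,c) > 0 for every w and conditional p(c|w) = p(w,c)/p(w). Let h(w,c) ≥ 0 denote the surprisal of word w in context c, let C > 0 be the channel capacity, and assume for every w ∈ V that H̄(w) := Σ_{c∈C_w} p(c|w) h(w,c) > 0. Define the CCH cost of a length assignment L : V → ℝ_{>0} as cost(L) = Σ_{w∈V} Σ_{c∈C_w} p(w,c)·(h(w,c)/L(w) − C)². Then the length assignment L*(w) = (1/C) · (Σ_{c∈C_w} p(c|w) h(w,c)²) / (Σ_{c∈C_w} p(c|w) h(w,c)) satisfies cost(L*) ≤ cost(L) for every L : V → ℝ_{>0}. -/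
/-- Theorem 2, CCH-optimal word lengths: The length assignment
`L*(w) = (1/C) · (Σ_c p(c|w) h(w,c)²) / (Σ_c p(c|w) h(w,c))` minimizes the
CCH cost `Σ_w Σ_c p(w,c) · (h(w,c)/L(w) − C)²` over all positive length
assignments `L : V → ℝ_{>0}`. -/
theorem cch_optimal_word_lengths {V Ctx : Type*} [Fintype V] [Nonempty V]
    (Cw : V → Finset Ctx) (hCw : ∀ w, (Cw w).Nonempty)
    (p : V → Ctx → ℝ) (hp : ∀ w, ∀ c ∈ Cw w, 0 ≤ p w c)
    (hsum : ∑ w, ∑ c ∈ Cw w, p w c = 1)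
    (pw : V → ℝ) (hpw : ∀ w, pw w = ∑ c ∈ Cw w, p w c)
    (hpwpos : ∀ w, 0 < pw w)
    (h : V → Ctx → ℝ) (hh : ∀ w, ∀ c ∈ Cw w, 0 ≤ h w c)
    (C : ℝ) (hC : 0 < C)
    (Hbar : V → ℝ) (hHbar : ∀ w, Hbar w = ∑ c ∈ Cw w, (p w c / pw w) * h w c)
    (hHpos : ∀ w, 0 < Hbar w)
    (cost : (V → ℝ) → ℝ)
    (hcost : ∀ L, cost L = ∑ w, ∑ c ∈ Cw w, p w c * (h w c / L w - C) ^ 2)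
    (Lstar : V → ℝ)
    (hLstar : ∀ w, Lstar w =
      (1 / C) * (∑ c ∈ Cw w, (p w c / pw w) * (h w c) ^ 2) /
        (∑ c ∈ Cw w, (p w c / pw w) * h w c)) :
    ∀ L : V → ℝ, (∀ w, 0 < L w) → cost Lstar ≤ cost L := by
  intro L hL
  rw [hcost, hcost]
  apply Finset.sum_le_sum
  intro w _
  set A := ∑ c ∈ Cw w, p w c * (h w c) ^ 2 with hAdef
  set B := ∑ c ∈ Cw w, p w c * h w c with hBdef
  have hpw' := hpwpos w
  have hpwne : pw w ≠ 0 := ne_of_gt hpw'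
  have hBp : B = pw w * Hbar w := by
    rw [hHbar w, Finset.mul_sum, hBdef]
    refine Finset.sum_congr rfl fun c hc => ?_
    field_simp
  have hB : 0 < B := by rw [hBp]; exact mul_pos hpw' (hHpos w)
  have hA0 : 0 ≤ A :=
    Finset.sum_nonneg fun c hc => mul_nonneg (hp w c hc) (sq_nonneg _)
  have hA : 0 < A := by
    rcases hA0.lt_or_eq with h' | h'
    · exact h'
    · exfalso
      have hz := (Finset.sum_eq_zero_iff_of_nonneg
        (fun c hc => mul_nonneg (hp w c hc) (sq_nonneg _))).mp h'.symm
      have hB0 : B = 0 := Finset.sum_eq_zero fun c hc => by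
        rcases mul_eq_zero.mp (hz c hc) with h1 | h2
        · rw [h1, zero_mul]
        · have : h w c = 0 := by
            have := pow_eq_zero_iff (two_ne_zero) |>.mp h2
            exact this
          rw [this, mul_zero]
      linarith
  have hAne : A ≠ 0 := ne_of_gt hA
  have hBne : B ≠ 0 := ne_of_gt hB
  have hCne : C ≠ 0 := ne_of_gt hC
  have e1 : ∑ c ∈ Cw w, (p w c / pw w) * (h w c) ^ 2 = A / pw w := by
    rw [hAdef, Finset.sum_div]
    exact Finset.sum_congr rfl fun c hc => by ring
  have e2 : ∑ c ∈ Cw w, (p w c / pw w) * h w c = B / pw w := by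
    rw [hBdef, Finset.sum_div]
    exact Finset.sum_congr rfl fun c hc => by ring
  have hLs : Lstar w = A / (C * B) := by
    rw [hLstar w, e1, e2]
    field_simp
  have hLsinv : (Lstar w)⁻¹ = C * B / A := by
    rw [hLs, inv_div]
  have key : ∀ s : ℝ, ∑ c ∈ Cw w, p w c * (h w c * s - C) ^ 2
      = A * s ^ 2 - B * (2 * C * s) + C ^ 2 * pw w := by
    intro s
    rw [hpw w, hAdef, hBdef, Finset.mul_sum, Finset.sum_mul, Finset.sum_mul,
      ← Finset.sum_sub_distrib, ← Finset.sum_add_distrib]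
    exact Finset.sum_congr rfl fun c hc => by ring
  have hrw : ∀ M : V → ℝ, ∑ c ∈ Cw w, p w c * (h w c / M w - C) ^ 2
      = ∑ c ∈ Cw w, p w c * (h w c * (M w)⁻¹ - C) ^ 2 := by
    intro M
    exact Finset.sum_congr rfl fun c hc => by rw [div_eq_mul_inv]
  rw [hrw Lstar, hrw L, key, key, hLsinv]
  set s2 := (L w)⁻¹ with hs2
  have hfact : C ^ 2 * B ^ 2 / A * A = C ^ 2 * B ^ 2 := div_mul_cancel₀ _ hAne
  have hq1 : A * (C * B / A) ^ 2 = C ^ 2 * B ^ 2 / A := by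
    field_simp
  have hq2 : B * (2 * C * (C * B / A)) = 2 * (C ^ 2 * B ^ 2 / A) := by
    field_simp
  rw [hq1, hq2]
  nlinarith [sq_nonneg (A * s2 - C * B), hA, hfact]
end

section
/- (Theorem 3, CCH↓-optimal word lengths.) Let V be a nonempty finite set of words and, for each w ∈ V, a nonempty finite set C_w of contexts. Let p be a probability mass function on pairs (w, c) with w ∈ V and c ∈ C_w, with marginal p(w) = Σ_{c∈C_w} p(w,c) > 0 for every w and conditional p(c|w) = p(w,c)/p(w). Let h(w,c) ≥ 0 denote the surprisal of word w in context c, let C > 0 be the channel capacity, and assume for every w ∈ V that the average surprisal H̄(w) := Σ_{c∈C_w} p(c|w) h(w,c) is strictly positive. Let d : ℝ × ℝ → ℝ be any function satisfying non-negativity (d(x,y) ≥ 0 for all x, y) and identity of indiscernibles (d(x,y) = 0 if and only if x = y). Define the CCH↓ cost of a length assignment L : V → ℝ_{>0} as cost↓(L) = Σ_{w∈V} p(w)·d(H̄(w)/L(w), C). Then the length assignment L*(w) = H̄(w)/C satisfies cost↓(L*) = 0 and hence cost↓(L*) ≤ cost↓(L) for every L : V → ℝ_{>0}. -/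
/-- Theorem 3, CCH↓-optimal word lengths: For any deviation
function `d` satisfying non-negativity and identity of indiscernibles, the
length assignment `L*(w) = H̄(w)/C` achieves zero CCH↓ cost
`Σ_w p(w) · d(H̄(w)/L(w), C)`, hence minimizes it over all positive length
assignments. -/
theorem cch_lower_optimal_word_lengths {V Ctx : Type*} [Fintype V] [Nonempty V]
    (Cw : V → Finset Ctx) (hCw : ∀ w, (Cw w).Nonempty)
    (p : V → Ctx → ℝ) (hp : ∀ w, ∀ c ∈ Cw w, 0 ≤ p w c)
    (hsum : ∑ w, ∑ c ∈ Cw w, p w c = 1)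
    (pw : V → ℝ) (hpw : ∀ w, pw w = ∑ c ∈ Cw w, p w c)
    (hpwpos : ∀ w, 0 < pw w)
    (h : V → Ctx → ℝ) (hh : ∀ w, ∀ c ∈ Cw w, 0 ≤ h w c)
    (C : ℝ) (hC : 0 < C)
    (Hbar : V → ℝ) (hHbar : ∀ w, Hbar w = ∑ c ∈ Cw w, (p w c / pw w) * h w c)
    (hHpos : ∀ w, 0 < Hbar w)
    (d : ℝ → ℝ → ℝ) (hd0 : ∀ x y, 0 ≤ d x y) (hdeq : ∀ x y, d x y = 0 ↔ x = y)
    (cost : (V → ℝ) → ℝ)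
    (hcost : ∀ L, cost L = ∑ w, pw w * d (Hbar w / L w) C)
    (Lstar : V → ℝ) (hLstar : ∀ w, Lstar w = Hbar w / C) :
    cost Lstar = 0 ∧ ∀ L : V → ℝ, (∀ w, 0 < L w) → cost Lstar ≤ cost L := by
  have hzero : cost Lstar = 0 := by
    rw [hcost]
    apply Finset.sum_eq_zero
    intro w _
    have : Hbar w / Lstar w = C := by
      rw [hLstar]
      field_simp
      rw [div_self (ne_of_gt (hHpos w))]
    rw [this, (hdeq C C).mpr rfl, mul_zero]
  refine ⟨hzero, fun L _ => ?_⟩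
  rw [hzero, hcost]
  exact Finset.sum_nonneg fun w _ =>
    mul_nonneg (le_of_lt (hpwpos w)) (hd0 _ _)
end
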